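/- Let K be a field of characteristic zero, let I be a finite index set, let σ denote the formal power series σ(T) = Σ_{k≥1} (-1)^k T^k in K[[T]], and for each i ∈ I let q_i ∈ K, let ε_i ∈ K with ε_i = 1 or ε_i = -1, and let F_i ∈ K[[T]] be a nonzero formal power series satisfying F_i∘σ = ε_i·exp(q_i·log(1+T))·F_i. Let F = Π_{i∈I} F_i, let m be the order of F, and let c_k denote the k-th coefficient of F. Then c_{m+1} = -(c_m/2)·((Σ_{i∈I} q_i) + m). -/

import Mathlib

open PowerSeries Finset
set_option linter.unusedSectionVars false

/-- `σ(T) = Σ_{k≥1} (-1)^k T^k = (1+T)⁻¹ - 1`. -/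
noncomputable def sigma (K : Type*) [Ring K] : PowerSeries K :=
  PowerSeries.mk fun k => if k = 0 then 0 else (-1) ^ k

/-- Substitution `f ∘ g` of a power series `g` with zero constant term
into a power series `f`: the `n`-th coefficient is `Σ_{j≤n} fⱼ · coeff n (g^j)`. -/
noncomputable def PowerSeries.comp {K : Type*} [CommSemiring K]
    (f g : PowerSeries K) : PowerSeries K :=
  PowerSeries.mk fun n => ∑ j ∈ range (n + 1), coeff j f * coeff n (g ^ j)

/-- `log(1+T) = Σ_{k≥1} (-1)^{k+1} T^k / k`. -/
noncomputable def logOneAdd (K : Type*) [Field K] [CharZero K] : PowerSeries K :=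
  PowerSeries.mk fun k => if k = 0 then 0 else (-1) ^ (k + 1) / (k : K)

/-- `exp(q·log(1+T)) = Σ_{n≥0} qⁿ·log(1+T)ⁿ/n!`, the formal binomial series `(1+T)^q`. -/
noncomputable def onePlusTPow {K : Type*} [Field K] [CharZero K] (q : K) :
    PowerSeries K :=
  (PowerSeries.exp K).comp (C q * logOneAdd K)

section Aux
variable {K : Type*} [Field K] [CharZero K]

/-- The series `g` with `σ = X * g`. -/
noncomputable def gser (K : Type*) [Ring K] : PowerSeries K :=
  PowerSeries.mk fun k => (-1) ^ (k + 1)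

lemma sigma_eq (K : Type*) [Ring K] : sigma K = X * gser K := by
  ext n
  cases n with
  | zero =>
      simp [sigma, gser, coeff_zero_eq_constantCoeff_apply]
  | succ n =>
      rw [coeff_succ_X_mul]
      simp [sigma, gser, pow_succ]

lemma constantCoeff_gser : constantCoeff (gser K) = -1 := by
  rw [← coeff_zero_eq_constantCoeff_apply]; simp [gser]

lemma coeff_zero_gser_pow (j : ℕ) : coeff 0 (gser K ^ j) = (-1) ^ j := by
  rw [coeff_zero_eq_constantCoeff_apply, map_pow, constantCoeff_gser]

lemma coeff_one_gser_pow (j : ℕ) : coeff 1 (gser K ^ j) = (-1) ^ (j + 1) * j := by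
  induction j with
  | zero => simp
  | succ j ih =>
      rw [pow_succ, mul_comm, coeff_mul]
      rw [Finset.Nat.sum_antidiagonal_eq_sum_range_succ_mk]
      rw [Finset.sum_range_succ, Finset.sum_range_one]
      have h0 : coeff 0 (gser K) = -1 := by simp [gser]
      have h1 : coeff 1 (gser K) = 1 := by simp [gser]
      rw [ih, coeff_zero_gser_pow, h0, h1]
      push_cast
      ring

lemma coeff_sigma_pow_self (j : ℕ) : coeff j (sigma K ^ j) = (-1) ^ j := by
  rw [sigma_eq, mul_pow]
  have := PowerSeries.coeff_X_pow_mul (gser K ^ j) j 0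
  simpa using this.trans (coeff_zero_gser_pow j)

lemma coeff_sigma_pow_succ (j : ℕ) :
    coeff (j + 1) (sigma K ^ j) = (-1) ^ (j + 1) * j := by
  rw [sigma_eq, mul_pow]
  have := PowerSeries.coeff_X_pow_mul (gser K ^ j) j 1
  rw [show j + 1 = 1 + j by omega]
  rw [this, coeff_one_gser_pow]
  ring

lemma coeff_zero_onePlusTPow (q : K) : coeff 0 (onePlusTPow q) = 1 := by
  rw [onePlusTPow, PowerSeries.comp, coeff_mk]
  simp [PowerSeries.coeff_exp]

lemma coeff_one_onePlusTPow (q : K) : coeff 1 (onePlusTPow q) = q := by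
  rw [onePlusTPow, PowerSeries.comp, coeff_mk]
  rw [Finset.sum_range_succ, Finset.sum_range_one]
  have h1 : coeff 1 (logOneAdd K) = 1 := by simp [logOneAdd]
  simp [PowerSeries.coeff_exp, h1]


lemma key (q e : K) (f : PowerSeries K) (n : ℕ)
    (h0 : ∀ k, k < n → coeff k f = 0) (hc : coeff n f ≠ 0)
    (hfe : f.comp (sigma K) = C e * (onePlusTPow q * f)) :
    coeff (n + 1) f = (-(q + (n : K)) / 2) * coeff n f := by
  -- coefficient n of both sides
  have lhsA : coeff n (f.comp (sigma K)) = (-1) ^ n * coeff n f := by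
    rw [PowerSeries.comp, coeff_mk]
    rw [Finset.sum_eq_single_of_mem n (self_mem_range_succ n)]
    · rw [coeff_sigma_pow_self]; ring
    · intro j hj hne
      have : j < n := lt_of_le_of_ne (Nat.lt_succ_iff.mp (mem_range.mp hj)) hne
      rw [h0 j this, zero_mul]
  have rhsA : coeff n (C e * (onePlusTPow q * f)) = e * coeff n f := by
    rw [coeff_C_mul, coeff_mul, Finset.Nat.sum_antidiagonal_eq_sum_range_succ_mk]
    rw [Finset.sum_eq_single_of_mem 0 (mem_range.mpr (Nat.succ_pos n))]
    · rw [coeff_zero_onePlusTPow, Nat.sub_zero, one_mul]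
    · intro j hj hne
      have hj' := mem_range.mp hj
      rw [h0 (n - j) (by omega), mul_zero]
  have eA : (-1 : K) ^ n * coeff n f = e * coeff n f := by
    rw [← lhsA, ← rhsA, hfe]
  have he : e = (-1 : K) ^ n := (mul_right_cancel₀ hc eA).symm
  -- coefficient n+1 of both sides
  have lhsB : coeff (n + 1) (f.comp (sigma K))
      = coeff n f * ((-1) ^ (n + 1) * n) + coeff (n + 1) f * (-1) ^ (n + 1) := by
    rw [PowerSeries.comp, coeff_mk]
    rw [Finset.sum_range_succ, Finset.sum_range_succ]
    rw [Finset.sum_eq_zero (fun j hj => by rw [h0 j (mem_range.mp hj), zero_mul])]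
    rw [coeff_sigma_pow_self, coeff_sigma_pow_succ, zero_add]
  have rhsB : coeff (n + 1) (C e * (onePlusTPow q * f))
      = e * (coeff (n + 1) f + q * coeff n f) := by
    rw [coeff_C_mul, coeff_mul, Finset.Nat.sum_antidiagonal_eq_sum_range_succ_mk]
    have hsub : ({0, 1} : Finset ℕ) ⊆ range (n + 1 + 1) := by
      intro x hx; simp only [mem_insert, mem_singleton] at hx
      rcases hx with rfl | rfl <;> simp [mem_range] <;> omega
    rw [← Finset.sum_subset hsub (fun x hx hnx => by
      have hx' := mem_range.mp hx
      have hx2 : 2 ≤ x := by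
        simp only [mem_insert, mem_singleton] at hnx; omega
      rw [h0 (n + 1 - x) (by omega), mul_zero])]
    rw [Finset.sum_pair (by omega : (0:ℕ) ≠ 1)]
    rw [coeff_zero_onePlusTPow, coeff_one_onePlusTPow, Nat.sub_zero, one_mul]
    norm_num
  have eB : coeff n f * ((-1 : K) ^ (n + 1) * n) + coeff (n + 1) f * (-1) ^ (n + 1)
      = e * (coeff (n + 1) f + q * coeff n f) := by
    rw [← lhsB, ← rhsB, hfe]
  rw [he] at eB
  have hpow : ((-1 : K)) ^ n ≠ 0 := pow_ne_zero _ (by norm_num)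
  have key2 : -((n : K) * coeff n f + coeff (n + 1) f)
      = coeff (n + 1) f + q * coeff n f := by
    apply mul_left_cancel₀ hpow
    rw [pow_succ] at eB
    linear_combination eB
  linear_combination (-1 / 2 : K) * key2


lemma mul_vanish (f g : PowerSeries K) (a b : ℕ)
    (hf : ∀ k, k < a → coeff k f = 0) (hg : ∀ k, k < b → coeff k g = 0) :
    ∀ k, k < a + b → coeff k (f * g) = 0 := by
  intro k hk
  rw [coeff_mul]
  apply Finset.sum_eq_zero
  intro p hp
  have hp' := Finset.HasAntidiagonal.mem_antidiagonal.mp hp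
  by_cases h : p.1 < a
  · rw [hf p.1 h, zero_mul]
  · rw [hg p.2 (by omega), mul_zero]

lemma mul_lead (f g : PowerSeries K) (a b : ℕ)
    (hf : ∀ k, k < a → coeff k f = 0) (hg : ∀ k, k < b → coeff k g = 0) :
    coeff (a + b) (f * g) = coeff a f * coeff b g := by
  rw [coeff_mul]
  apply Finset.sum_eq_single_of_mem (a, b) (Finset.HasAntidiagonal.mem_antidiagonal.mpr rfl)
  intro p hp hne
  have hp' := Finset.HasAntidiagonal.mem_antidiagonal.mp hp
  by_cases h : p.1 < a
  · rw [hf p.1 h, zero_mul]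
  · have : p.2 < b := by
      rcases Nat.lt_or_ge p.2 b with h2 | h2
      · exact h2
      · exfalso; apply hne; have : p.1 = a := by omega
        exact Prod.ext this (by omega)
    rw [hg p.2 this, mul_zero]

lemma mul_sublead (f g : PowerSeries K) (a b : ℕ)
    (hf : ∀ k, k < a → coeff k f = 0) (hg : ∀ k, k < b → coeff k g = 0) :
    coeff (a + b + 1) (f * g)
      = coeff a f * coeff (b + 1) g + coeff (a + 1) f * coeff b g := by
  rw [coeff_mul, Finset.Nat.sum_antidiagonal_eq_sum_range_succ_mk]
  have hsub : ({a, a + 1} : Finset ℕ) ⊆ range (a + b + 1 + 1) := by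
    intro x hx; simp only [mem_insert, mem_singleton] at hx
    rcases hx with rfl | rfl <;> exact mem_range.mpr (by omega)
  rw [← Finset.sum_subset hsub (fun x hx hnx => by
    have hx' := mem_range.mp hx
    simp only [mem_insert, mem_singleton] at hnx
    by_cases h : x < a
    · rw [hf x h, zero_mul]
    · rw [hg (a + b + 1 - x) (by omega), mul_zero])]
  rw [Finset.sum_pair (by omega : a ≠ a + 1),
    show a + b + 1 - a = b + 1 by omega, show a + b + 1 - (a + 1) = b by omega]

lemma prod_coeffs {ι : Type*} (s : Finset ι) (F : ι → PowerSeries K)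
    (n : ι → ℕ) (r : ι → K)
    (h0 : ∀ i ∈ s, ∀ k, k < n i → coeff k (F i) = 0)
    (hr : ∀ i ∈ s, coeff (n i + 1) (F i) = r i * coeff (n i) (F i)) :
    (∀ k, k < ∑ i ∈ s, n i → coeff k (∏ i ∈ s, F i) = 0) ∧
    coeff (∑ i ∈ s, n i) (∏ i ∈ s, F i) = ∏ i ∈ s, coeff (n i) (F i) ∧
    coeff ((∑ i ∈ s, n i) + 1) (∏ i ∈ s, F i)
      = (∑ i ∈ s, r i) * ∏ i ∈ s, coeff (n i) (F i) := by
  classical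
  induction s using Finset.induction_on with
  | empty =>
      refine ⟨fun k hk => absurd hk (by simp), by simp, by simp⟩
  | @insert a s ha ih =>
      have h0a : ∀ k, k < n a → coeff k (F a) = 0 := h0 a (mem_insert_self a s)
      obtain ⟨ih1, ih2, ih3⟩ := ih (fun i hi => h0 i (mem_insert_of_mem hi))
        (fun i hi => hr i (mem_insert_of_mem hi))
      rw [Finset.prod_insert ha, Finset.sum_insert ha, Finset.sum_insert ha,
        Finset.prod_insert ha]
      refine ⟨mul_vanish _ _ _ _ h0a ih1, ?_, ?_⟩
      · rw [mul_lead _ _ _ _ h0a ih1, ih2]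
      · rw [mul_sublead _ _ _ _ h0a ih1, ih2, ih3,
          hr a (mem_insert_self a s)]
        ring

end Aux

/-- if each nonzero `Fᵢ ∈ K⟦T⟧` satisfies
`Fᵢ∘σ = εᵢ·exp(qᵢ·log(1+T))·Fᵢ` with `εᵢ = ±1`, and `F = Π Fᵢ` has order `m` with
coefficients `cₖ`, then `c_{m+1} = -(c_m/2)·((Σ qᵢ) + m)`. -/
theorem subleading_coeff_prod_T
    {K : Type*} [Field K] [CharZero K] {ι : Type*} [Fintype ι]
    (q ε : ι → K) (hε : ∀ i, ε i = 1 ∨ ε i = -1)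
    (F : ι → PowerSeries K) (hF : ∀ i, F i ≠ 0)
    (hfe : ∀ i, (F i).comp (sigma K) = C (ε i) * (onePlusTPow (q i) * F i))
    (m : ℕ) (hm : (∏ i, F i).order = (m : ℕ∞)) :
    coeff (m + 1) (∏ i, F i)
      = -(coeff m (∏ i, F i) / 2) * ((∑ i, q i) + m) := by
  classical
  set n : ι → ℕ := fun i => ((F i).order).toNat with hn
  have hne : ∀ i, (F i).order ≠ ⊤ := fun i => by
    simp only [ne_eq, PowerSeries.order_eq_top]; exact hF i
  have hord : ∀ i, (F i).order = (n i : ℕ∞) := fun i => (ENat.coe_toNat (hne i)).symm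
  have hcoef := fun i => (PowerSeries.order_eq_nat.mp (hord i))
  have hri : ∀ i, coeff (n i + 1) (F i)
      = (-(q i + (n i : K)) / 2) * coeff (n i) (F i) :=
    fun i => key (q i) (ε i) (F i) (n i) (fun k hk => (hcoef i).2 k hk)
      (hcoef i).1 (hfe i)
  obtain ⟨P0, P1, P2⟩ := prod_coeffs Finset.univ F n (fun i => -(q i + (n i : K)) / 2)
    (fun i _ => (hcoef i).2) (fun i _ => hri i)
  have hordP : (∏ i, F i).order = ((∑ i, n i : ℕ) : ℕ∞) :=
    PowerSeries.order_eq_nat.mpr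
      ⟨by rw [P1]; exact Finset.prod_ne_zero_iff.mpr (fun i _ => (hcoef i).1), P0⟩
  have hmn : ∑ i, n i = m := by
    have := hordP.symm.trans hm
    exact_mod_cast this
  rw [← hmn, P2, P1]
  have e : (∑ i, (-(q i + (n i : K)) / 2)) = -((∑ i, q i) + ((∑ i, n i : ℕ) : K)) / 2 := by
    push_cast
    rw [← Finset.sum_add_distrib, ← Finset.sum_neg_distrib, ← Finset.sum_div]
  rw [e]
  push_cast
  ring
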